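/- arXiv:2108.11891 — 2 statements merged into one kernel-verified Lean document; each statement's English description precedes it below -/
import Mathlib

section
/- Let β > 0 and σ > 0. Then the function x ↦ (exp(-β x / (2σ)) - exp(-β x / 2))² / x is integrable on (0, ∞), and ∫₀^∞ (exp(-β x / (2σ)) - exp(-β x / 2))² / x dx ≤ (β² / 4) · (1/σ - 1)² + 2σ/β + 2 exp(-β)/β. In particular, if σ ≥ σ₀ for some σ₀ > 0, this integral is at most (β² / 4) · (1/σ₀² + 1)·2/2 + 2σ/β + 2 exp(-β)/β, a bound affine in σ. -/
open Real MeasureTheory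

lemma exp_neg_sub_sq_le (u v : ℝ) (hu : 0 ≤ u) (hv : 0 ≤ v) :
    (exp (-u) - exp (-v)) ^ 2 ≤ (u - v) ^ 2 := by
  have main : ∀ a b : ℝ, 0 ≤ a → a ≤ b → (exp (-a) - exp (-b)) ^ 2 ≤ (a - b) ^ 2 := by
    intro a b ha hab
    have h1 := Real.add_one_le_exp (a - b)
    have h3 : exp (-a) * exp (a - b) = exp (-b) := by rw [← Real.exp_add]; ring_nf
    have h5 : exp (-a) ≤ 1 := Real.exp_le_one_iff.mpr (by linarith)
    have h7 := Real.exp_pos (-a)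
    have hnn : (0:ℝ) ≤ exp (-a) - exp (-b) := by
      have := Real.exp_le_exp.mpr (neg_le_neg hab)
      linarith
    have key : exp (-a) - exp (-b) ≤ b - a := by
      nlinarith [mul_le_mul_of_nonneg_left h1 h7.le,
        mul_le_mul_of_nonneg_right h5 (sub_nonneg.mpr hab)]
    have := pow_le_pow_left₀ hnn key 2
    calc (exp (-a) - exp (-b)) ^ 2 ≤ (b - a) ^ 2 := this
      _ = (a - b) ^ 2 := by ring
  rcases le_total u v with h | h
  · exact main u v hu h
  · have := main v u hv h
    calc (exp (-u) - exp (-v)) ^ 2 = (exp (-v) - exp (-u)) ^ 2 := by ring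
      _ ≤ (v - u) ^ 2 := this
      _ = (u - v) ^ 2 := by ring

lemma integral_exp_neg_mul_Ioi (a : ℝ) {b : ℝ} (hb : 0 < b) :
    ∫ x in Set.Ioi a, exp (-b * x) = exp (-b * a) / b := by
  have hderiv : ∀ x ∈ Set.Ici a, HasDerivAt (fun y : ℝ => -exp (-b * y) / b) (exp (-b * x)) x := by
    intro x _
    have hlin : HasDerivAt (fun y : ℝ => -b * y) (-b) x := by
      simpa using (hasDerivAt_id x).const_mul (-b)
    have : HasDerivAt (fun y : ℝ => exp (-b * y)) (exp (-b * x) * (-b)) x :=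
      (Real.hasDerivAt_exp (-b * x)).comp x hlin
    have := (this.neg).div_const b
    have e : -(exp (-b * x) * -b) / b = exp (-b * x) := by rw [div_eq_iff hb.ne']; ring
    rw [e] at this
    exact this
  have hint : IntegrableOn (fun x => exp (-b * x)) (Set.Ioi a) := exp_neg_integrableOn_Ioi a hb
  have hlim : Filter.Tendsto (fun y : ℝ => -exp (-b * y) / b) Filter.atTop (nhds 0) := by
    have : Filter.Tendsto (fun y : ℝ => -b * y) Filter.atTop Filter.atBot :=
      Filter.Tendsto.const_mul_atTop_of_neg (neg_neg_iff_pos.mpr hb) Filter.tendsto_id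
    have h2 := (Real.tendsto_exp_atBot.comp this).neg.div_const b
    simpa using h2
  have := integral_Ioi_of_hasDerivAt_of_tendsto' hderiv hint hlim
  rw [this]
  field_simp
  ring

theorem hellinger_full_bound (β σ : ℝ) (hβ : 0 < β) (hσ : 0 < σ) :
    (IntegrableOn (fun x : ℝ => (exp (-β * x / (2 * σ)) - exp (-β * x / 2)) ^ 2 / x)
        (Set.Ioi 0) ∧
      ∫ x in Set.Ioi (0:ℝ), (exp (-β * x / (2 * σ)) - exp (-β * x / 2)) ^ 2 / x ≤
        β ^ 2 / 4 * (1 / σ - 1) ^ 2 + 2 * σ / β + 2 * exp (-β) / β) ∧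
    ∀ σ₀ : ℝ, 0 < σ₀ → σ₀ ≤ σ →
      ∫ x in Set.Ioi (0:ℝ), (exp (-β * x / (2 * σ)) - exp (-β * x / 2)) ^ 2 / x ≤
        β ^ 2 / 4 * (1 / σ₀ ^ 2 + 1) * 2 / 2 + 2 * σ / β + 2 * exp (-β) / β := by
  set f : ℝ → ℝ := fun x => (exp (-β * x / (2 * σ)) - exp (-β * x / 2)) ^ 2 / x with hf
  set C : ℝ := β ^ 2 / 4 * (1 / σ - 1) ^ 2 with hC
  have hC0 : 0 ≤ C := by positivity
  have hβσ : 0 < β / σ := div_pos hβ hσ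
  -- pointwise facts
  have hfnn : ∀ x ∈ Set.Ioi (0:ℝ), 0 ≤ f x := fun x hx =>
    div_nonneg (sq_nonneg _) (le_of_lt hx)
  have hb1 : ∀ x ∈ Set.Ioc (0:ℝ) 1, f x ≤ C * x := by
    intro x hx
    have hx0 : 0 < x := hx.1
    have hu : (0:ℝ) ≤ β * x / (2 * σ) := by positivity
    have hv : (0:ℝ) ≤ β * x / 2 := by positivity
    have h1 : (exp (-β * x / (2 * σ)) - exp (-β * x / 2)) ^ 2
        ≤ (β * x / (2 * σ) - β * x / 2) ^ 2 := by
      have := exp_neg_sub_sq_le (β * x / (2 * σ)) (β * x / 2) hu hv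
      simpa [neg_div] using this
    have h2 : (β * x / (2 * σ) - β * x / 2) ^ 2 = C * x * x := by
      field_simp [hC]
      rw [hC]; field_simp; ring
    rw [hf, div_le_iff₀ hx0]
    calc (exp (-β * x / (2 * σ)) - exp (-β * x / 2)) ^ 2
        ≤ (β * x / (2 * σ) - β * x / 2) ^ 2 := h1
      _ = C * x * x := h2
  have hb2 : ∀ x ∈ Set.Ioi (1:ℝ),
      f x ≤ 2 * exp (-(β / σ) * x) + 2 * exp (-β * x) := by
    intro x hx
    have hx1 : (1:ℝ) < x := hx
    have hx0 : 0 < x := lt_trans one_pos hx1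
    have hp : exp (-β * x / (2 * σ)) ^ 2 = exp (-(β / σ) * x) := by
      rw [pow_two, ← Real.exp_add]
      congr 1
      field_simp
      ring
    have hq : exp (-β * x / 2) ^ 2 = exp (-β * x) := by
      rw [pow_two, ← Real.exp_add]
      congr 1
      ring
    have h1 : f x ≤ (exp (-β * x / (2 * σ)) - exp (-β * x / 2)) ^ 2 := by
      rw [hf]
      exact div_le_self (sq_nonneg _) hx1.le
    have h2 : (exp (-β * x / (2 * σ)) - exp (-β * x / 2)) ^ 2
        ≤ 2 * exp (-(β / σ) * x) + 2 * exp (-β * x) := by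
      nlinarith [sq_nonneg (exp (-β * x / (2 * σ)) + exp (-β * x / 2)), hp, hq]
    linarith
  -- measurability
  have hmeas : ∀ s : Set ℝ, s ⊆ Set.Ioi 0 → MeasurableSet s → AEStronglyMeasurable f (volume.restrict s) := by
    intro s hs hms
    have hcont : ContinuousOn f s := by
      apply ContinuousOn.div
      · fun_prop
      · fun_prop
      · intro x hx; exact ne_of_gt (hs hx)
    exact hcont.aestronglyMeasurable hms
  -- integrability on the two pieces
  have hint1 : IntegrableOn f (Set.Ioc 0 1) := by
    apply Integrable.mono' (g := fun x => C * x)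
    · exact (continuous_const.mul continuous_id).integrableOn_Ioc
    · exact hmeas _ (fun x hx => hx.1) measurableSet_Ioc
    · filter_upwards [ae_restrict_mem measurableSet_Ioc] with x hx
      rw [Real.norm_eq_abs, abs_of_nonneg (hfnn x hx.1)]
      exact hb1 x hx
  have hgint : IntegrableOn (fun x => 2 * exp (-(β / σ) * x) + 2 * exp (-β * x)) (Set.Ioi 1) := by
    exact ((exp_neg_integrableOn_Ioi 1 hβσ).const_mul 2).add
      ((exp_neg_integrableOn_Ioi 1 hβ).const_mul 2)
  have hint2 : IntegrableOn f (Set.Ioi 1) := by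
    apply Integrable.mono' hgint
    · exact hmeas _ (fun x hx => Set.mem_Ioi.mpr (lt_trans one_pos hx)) measurableSet_Ioi
    · filter_upwards [ae_restrict_mem measurableSet_Ioi] with x hx
      rw [Real.norm_eq_abs, abs_of_nonneg (hfnn x (Set.mem_Ioi.mpr (lt_trans one_pos hx)))]
      exact hb2 x hx
  have hsplit : Set.Ioc (0:ℝ) 1 ∪ Set.Ioi 1 = Set.Ioi 0 := Set.Ioc_union_Ioi_eq_Ioi zero_le_one
  have hIntOn : IntegrableOn f (Set.Ioi 0) := by
    rw [← hsplit]; exact hint1.union hint2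
  -- integral split
  have hIsplit : ∫ x in Set.Ioi (0:ℝ), f x
      = (∫ x in Set.Ioc (0:ℝ) 1, f x) + ∫ x in Set.Ioi (1:ℝ), f x := by
    rw [← hsplit]
    exact setIntegral_union (Set.Ioc_disjoint_Ioi le_rfl) measurableSet_Ioi hint1 hint2
  -- bound on first piece
  have hI1 : ∫ x in Set.Ioc (0:ℝ) 1, f x ≤ C := by
    have hCg : IntegrableOn (fun x : ℝ => C * x) (Set.Ioc 0 1) :=
      Continuous.integrableOn_Ioc (by fun_prop)
    have h := setIntegral_mono_on hint1 hCg measurableSet_Ioc hb1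
    have hcomp : ∫ x in Set.Ioc (0:ℝ) 1, C * x = C / 2 := by
      rw [← intervalIntegral.integral_of_le zero_le_one,
        intervalIntegral.integral_const_mul, integral_id]
      ring
    rw [hcomp] at h
    linarith
  -- bound on second piece
  have hI2 : ∫ x in Set.Ioi (1:ℝ), f x ≤ 2 * σ / β + 2 * exp (-β) / β := by
    have h := setIntegral_mono_on hint2 hgint measurableSet_Ioi hb2
    have hcomp : ∫ x in Set.Ioi (1:ℝ), (2 * exp (-(β / σ) * x) + 2 * exp (-β * x))
        = 2 * (exp (-(β / σ)) / (β / σ)) + 2 * (exp (-β) / β) := by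
      rw [integral_add ((exp_neg_integrableOn_Ioi 1 hβσ).const_mul 2)
        ((exp_neg_integrableOn_Ioi 1 hβ).const_mul 2),
        integral_const_mul, integral_const_mul,
        integral_exp_neg_mul_Ioi 1 hβσ, integral_exp_neg_mul_Ioi 1 hβ]
      norm_num
    rw [hcomp] at h
    have hbd : 2 * (exp (-(β / σ)) / (β / σ)) ≤ 2 * σ / β := by
      have h1 : exp (-(β / σ)) ≤ 1 := Real.exp_le_one_iff.mpr (by linarith)
      have h4 : exp (-(β / σ)) / (β / σ) ≤ σ / β := by
        rw [div_le_iff₀ hβσ]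
        calc exp (-(β / σ)) ≤ 1 := h1
          _ = σ / β * (β / σ) := by field_simp
      calc 2 * (exp (-(β / σ)) / (β / σ)) ≤ 2 * (σ / β) :=
            mul_le_mul_of_nonneg_left h4 (by norm_num)
        _ = 2 * σ / β := by ring
    have : 2 * (exp (-β) / β) = 2 * exp (-β) / β := by ring
    linarith
  have hmain : ∫ x in Set.Ioi (0:ℝ), f x ≤ C + 2 * σ / β + 2 * exp (-β) / β := by
    rw [hIsplit]; linarith
  refine ⟨⟨hIntOn, hmain⟩, ?_⟩
  intro σ₀ hσ₀ hle
  have ht : 1 / σ ≤ 1 / σ₀ := one_div_le_one_div_of_le hσ₀ hle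
  have ht0 : 0 < 1 / σ := by positivity
  have hCle : C ≤ β ^ 2 / 4 * (1 / σ₀ ^ 2 + 1) * 2 / 2 := by
    rw [hC]
    have : (1 / σ - 1) ^ 2 ≤ 1 / σ₀ ^ 2 + 1 := by
      have h2 : (1/σ)^2 ≤ (1/σ₀)^2 := by nlinarith
      have : (1/σ₀)^2 = 1/σ₀^2 := by field_simp
      nlinarith
    nlinarith [sq_nonneg β]
  linarith
end

section
/- Let α > 0, β > 0 and σ > 0, and define y(σ, z) = exp(-β z (1/σ - 1)) for z > 0. Then the function z ↦ (y(σ,z) log y(σ,z) - y(σ,z) + 1) · (α/z) · exp(-β z) is integrable on (0, ∞), and ∫₀^∞ (y(σ,z) log y(σ,z) - y(σ,z) + 1) · (α/z) · exp(-β z) dz = α (σ - 1 - log σ). -/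
open Real MeasureTheory Set

lemma exp_neg_mul_integral {r : ℝ} (hr : 0 < r) :
    ∫ z in Ioi (0:ℝ), exp (-(r * z)) = 1 / r := by
  have := integral_comp_mul_left_Ioi (fun x : ℝ => exp (-x)) 0 hr
  simp only [mul_zero] at this
  rw [show (fun z : ℝ => exp (-(r*z))) = (fun z => (fun x : ℝ => exp (-x)) (r * z)) by rfl, this,
    integral_exp_neg_Ioi_zero, smul_eq_mul, mul_one, one_div]

lemma exp_neg_mul_integrable {r : ℝ} (hr : 0 < r) :
    IntegrableOn (fun z : ℝ => exp (-(r * z))) (Ioi (0:ℝ)) := by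
  simpa [neg_mul] using exp_neg_integrableOn_Ioi 0 hr

lemma frullani_aux {a b : ℝ} (ha : 0 < a) (hab : a ≤ b) :
    IntegrableOn (fun z : ℝ => (exp (-(a*z)) - exp (-(b*z)))/z) (Ioi 0) ∧
    ∫ z in Ioi (0:ℝ), (exp (-(a*z)) - exp (-(b*z)))/z = Real.log b - Real.log a := by
  have hb : 0 < b := lt_of_lt_of_le ha hab
  set μ : Measure ℝ := volume.restrict (Icc a b)
  set ν : Measure ℝ := volume.restrict (Ioi 0)
  -- inner integral in t
  have hinner : ∀ z ∈ Ioi (0:ℝ),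
      (∫ t in Icc a b, exp (-(t*z))) = (exp (-(a*z)) - exp (-(b*z)))/z := by
    intro z hz
    have hz' : (0:ℝ) < z := hz
    have hd : ∀ t : ℝ, HasDerivAt (fun t => -exp (-(t*z))/z) (exp (-(t*z))) t := by
      intro t
      have h1 : HasDerivAt (fun t : ℝ => -(t*z)) (-z) t := by
        simpa [Pi.neg_def] using ((hasDerivAt_id t).mul_const z).neg
      have h2 := h1.exp
      have h3 := (h2.neg).div_const z
      convert h3 using 1
      · rfl
      · rfl
      · rfl
      · field_simp
    have hcont : IntervalIntegrable (fun t => exp (-(t*z))) volume a b :=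
      (Continuous.intervalIntegrable (by continuity) a b)
    have := intervalIntegral.integral_eq_sub_of_hasDerivAt (fun t _ => hd t) hcont
    rw [MeasureTheory.integral_Icc_eq_integral_Ioc, ← intervalIntegral.integral_of_le hab, this]
    ring
  -- integrability on product
  have hmeas : AEStronglyMeasurable (fun p : ℝ × ℝ => exp (-(p.1 * p.2))) (μ.prod ν) :=
    (Continuous.aestronglyMeasurable (by continuity))
  have hprod : Integrable (Function.uncurry fun t z => exp (-(t*z))) (μ.prod ν) := by
    rw [show (Function.uncurry fun t z : ℝ => exp (-(t*z))) = (fun p : ℝ × ℝ => exp (-(p.1 * p.2))) from rfl, integrable_prod_iff hmeas]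
    constructor
    · refine (ae_restrict_iff' measurableSet_Icc).2 (Filter.Eventually.of_forall ?_)
      intro t ht
      have : 0 < t := lt_of_lt_of_le ha ht.1
      exact exp_neg_mul_integrable this
    · apply Integrable.mono' (g := fun _ : ℝ => 1/a)
        (integrableOn_const measure_Icc_lt_top.ne)
      · exact AEStronglyMeasurable.integral_prod_right'
          (f := fun p : ℝ × ℝ => ‖exp (-(p.1 * p.2))‖) hmeas.norm
      · refine (ae_restrict_iff' measurableSet_Icc).2 (Filter.Eventually.of_forall ?_)
        intro t ht
        have ht0 : 0 < t := lt_of_lt_of_le ha ht.1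
        have : (∫ z, ‖exp (-(t*z))‖ ∂ν) = 1/t := by
          simp only [Real.norm_eq_abs, abs_of_pos (exp_pos _)]
          exact exp_neg_mul_integral ht0
        rw [Real.norm_eq_abs, this, abs_of_pos (by positivity)]
        exact one_div_le_one_div_of_le ha ht.1
  have hswap := MeasureTheory.integral_integral_swap hprod
  -- LHS of swap
  have hL : (∫ t, (∫ z, exp (-(t*z)) ∂ν) ∂μ) = Real.log b - Real.log a := by
    have : ∀ t ∈ Icc a b, (∫ z, exp (-(t*z)) ∂ν) = 1/t := by
      intro t ht
      exact exp_neg_mul_integral (lt_of_lt_of_le ha ht.1)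
    rw [MeasureTheory.setIntegral_congr_fun measurableSet_Icc this,
      MeasureTheory.integral_Icc_eq_integral_Ioc, ← intervalIntegral.integral_of_le hab,
      integral_one_div (by rw [Set.uIcc_of_le hab]; exact fun h => absurd h.1 (not_le.2 ha)), Real.log_div hb.ne' ha.ne']
  have hR : (∫ z, (∫ t, exp (-(t*z)) ∂μ) ∂ν) = ∫ z in Ioi (0:ℝ), (exp (-(a*z)) - exp (-(b*z)))/z :=
    MeasureTheory.setIntegral_congr_fun measurableSet_Ioi hinner
  have h5 : Integrable (fun z => ∫ t, exp (-(t*z)) ∂μ) ν := hprod.integral_prod_right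
  have hint : IntegrableOn (fun z : ℝ => (exp (-(a*z)) - exp (-(b*z)))/z) (Ioi 0) :=
    h5.congr ((ae_restrict_iff' measurableSet_Ioi).2 (Filter.Eventually.of_forall hinner))
  exact ⟨hint, by rw [← hR, ← hswap, hL]⟩

lemma frullani {a b : ℝ} (ha : 0 < a) (hb : 0 < b) :
    IntegrableOn (fun z : ℝ => (exp (-(a*z)) - exp (-(b*z)))/z) (Ioi 0) ∧
    ∫ z in Ioi (0:ℝ), (exp (-(a*z)) - exp (-(b*z)))/z = Real.log b - Real.log a := by
  rcases le_total a b with hab | hab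
  · exact frullani_aux ha hab
  · obtain ⟨h1, h2⟩ := frullani_aux hb hab
    have hneg : (fun z : ℝ => (exp (-(a*z)) - exp (-(b*z)))/z)
        = fun z => -((exp (-(b*z)) - exp (-(a*z)))/z) := by funext z; ring
    constructor
    · rw [hneg]; exact h1.neg
    · rw [hneg, integral_neg, h2]; ring

theorem lepingle_memin_integrand (α β σ : ℝ) (hα : 0 < α) (hβ : 0 < β) (hσ : 0 < σ) :
    IntegrableOn
        (fun z : ℝ =>
          (exp (-β * z * (1 / σ - 1)) * Real.log (exp (-β * z * (1 / σ - 1)))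
            - exp (-β * z * (1 / σ - 1)) + 1) * (α / z) * exp (-β * z))
        (Set.Ioi 0) ∧
      ∫ z in Set.Ioi (0:ℝ),
          (exp (-β * z * (1 / σ - 1)) * Real.log (exp (-β * z * (1 / σ - 1)))
            - exp (-β * z * (1 / σ - 1)) + 1) * (α / z) * exp (-β * z) =
        α * (σ - 1 - Real.log σ) := by
  have hr : 0 < β / σ := div_pos hβ hσ
  set g : ℝ → ℝ := fun z =>
    α * ((-(β * (1 / σ - 1))) * exp (-((β / σ) * z)) + (exp (-(β * z)) - exp (-((β / σ) * z))) / z)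
    with hg
  have heq : Set.EqOn
      (fun z : ℝ =>
        (exp (-β * z * (1 / σ - 1)) * Real.log (exp (-β * z * (1 / σ - 1)))
          - exp (-β * z * (1 / σ - 1)) + 1) * (α / z) * exp (-β * z)) g (Set.Ioi 0) := by
    intro z hz
    have hz0 : z ≠ 0 := ne_of_gt hz
    have h3 : exp (-((β / σ) * z)) = exp (-β * z * (1 / σ - 1)) * exp (-β * z) := by
      rw [← Real.exp_add]; congr 1; field_simp; ring
    have h4 : exp (-(β * z)) = exp (-β * z) := by norm_num
    simp only [hg, Real.log_exp, h3, h4]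
    field_simp
    ring
  have I1 : IntegrableOn (fun z : ℝ => exp (-((β / σ) * z))) (Set.Ioi 0) :=
    exp_neg_mul_integrable hr
  obtain ⟨I2, V2⟩ := frullani hβ hr
  have Ig : IntegrableOn g (Set.Ioi 0) :=
    ((I1.const_mul (-(β * (1 / σ - 1)))).add I2).const_mul α
  refine ⟨Ig.congr_fun heq.symm measurableSet_Ioi, ?_⟩
  rw [MeasureTheory.setIntegral_congr_fun measurableSet_Ioi heq, hg]
  rw [MeasureTheory.integral_const_mul, MeasureTheory.integral_add
      (I1.const_mul (-(β * (1 / σ - 1)))) I2, MeasureTheory.integral_const_mul,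
    exp_neg_mul_integral hr, V2, Real.log_div hβ.ne' hσ.ne']
  have : -(β * (1 / σ - 1)) * (1 / (β / σ)) = σ - 1 := by field_simp; ring
  rw [this]; ring
end
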